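/- Let 1 < p < ∞, k ≥ 1, L > 0, and let f : ℝ^k → ℝ be a C² function satisfying |f(ξ)| ≤ L(1 + |ξ|^p) and |Df(ξ)| ≤ L(1 + |ξ|²)^{(p−1)/2} for all ξ ∈ ℝ^k. For Q ∈ ℝ^k and λ > 0 define f_{Q,λ}(ξ) := ( f(Q + λξ) − f(Q) − Df(Q)·(λξ) ) / λ². Then for every M > 0 there exists a constant c = c(p, L, M) > 0 such that for every Q ∈ ℝ^k with |Q| ≤ M, every λ > 0 and every ξ ∈ ℝ^k one has |f_{Q,λ}(ξ)| ≤ c (1 + |λξ|²)^{(p−2)/2} |ξ|² and |D f_{Q,λ}(ξ)| ≤ c (1 + |λξ|²)^{(p−2)/2} |ξ|. -/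

import Mathlib

open Real Metric

private lemma aux1 {p t : ℝ} (ht0 : 0 ≤ t) (ht : t ≤ 1) :
    min 1 ((2:ℝ) ^ ((p-2)/2)) ≤ (1 + t ^ 2) ^ ((p-2)/2) := by
  rcases le_or_gt 0 ((p-2)/2) with he | he
  · exact le_trans (min_le_left _ _) (one_le_rpow (by nlinarith) he)
  · refine le_trans (min_le_right _ _) ?_
    exact Real.rpow_le_rpow_of_nonpos (by positivity) (by nlinarith) he.le

private lemma aux2 {p t : ℝ} (ht : 1 < t) :
    t ^ (p - 2) ≤ (max 1 ((2:ℝ) ^ (-((p-2)/2)))) * (1 + t ^ 2) ^ ((p-2)/2) := by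
  have htpos : (0:ℝ) < t := lt_trans one_pos ht
  have hA0 : (0:ℝ) < (1 + t ^ 2) ^ ((p-2)/2) := rpow_pos_of_pos (by positivity) _
  have hkey : t ^ (p-2) = (t ^ 2 : ℝ) ^ ((p-2)/2) := by
    rw [← Real.rpow_natCast t 2, ← Real.rpow_mul htpos.le]
    congr 1
    push_cast
    ring
  rcases le_or_gt 0 ((p-2)/2) with he | he
  · rw [hkey]
    calc ((t^2 : ℝ)) ^ ((p-2)/2) ≤ (1 + t^2) ^ ((p-2)/2) :=
          Real.rpow_le_rpow (by positivity) (by linarith) he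
      _ = 1 * (1 + t^2) ^ ((p-2)/2) := (one_mul _).symm
      _ ≤ _ := mul_le_mul_of_nonneg_right (le_max_left _ _) hA0.le
  · have h2t : (2:ℝ) ^ ((p-2)/2) * (t^2 : ℝ) ^ ((p-2)/2) ≤ (1 + t^2) ^ ((p-2)/2) := by
      rw [← Real.mul_rpow (by norm_num) (by positivity)]
      exact Real.rpow_le_rpow_of_nonpos (by positivity) (by nlinarith) he.le
    have h2e : (0:ℝ) < (2:ℝ) ^ ((p-2)/2) := rpow_pos_of_pos two_pos _
    have hone : (2:ℝ) ^ (-((p-2)/2)) * (2:ℝ) ^ ((p-2)/2) = 1 := by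
      rw [← Real.rpow_add two_pos]
      norm_num
    have hstep : (t^2 : ℝ) ^ ((p-2)/2) ≤ (2:ℝ) ^ (-((p-2)/2)) * (1 + t^2) ^ ((p-2)/2) := by
      calc (t^2 : ℝ) ^ ((p-2)/2)
          = (2:ℝ) ^ (-((p-2)/2)) * ((2:ℝ) ^ ((p-2)/2) * (t^2) ^ ((p-2)/2)) := by
            rw [← mul_assoc, hone, one_mul]
        _ ≤ (2:ℝ) ^ (-((p-2)/2)) * (1 + t^2) ^ ((p-2)/2) :=
            mul_le_mul_of_nonneg_left h2t (rpow_pos_of_pos two_pos _).le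
    rw [hkey]
    exact le_trans hstep (mul_le_mul_of_nonneg_right (le_max_right _ _) hA0.le)

private lemma aux3 {p t : ℝ} (ht : 1 < t) :
    (1 + t ^ 2 : ℝ) ^ ((p-1)/2) ≤
      (1 + t ^ 2) ^ ((p-2)/2) * ((2:ℝ) ^ ((1:ℝ)/2) * t) := by
  have htpos : (0:ℝ) < t := lt_trans one_pos ht
  have hsplit : (1 + t ^ 2 : ℝ) ^ ((p-1)/2)
      = (1 + t ^ 2) ^ ((p-2)/2) * (1 + t ^ 2) ^ ((1:ℝ)/2) := by
    rw [← Real.rpow_add (by positivity)]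
    congr 1
    ring
  have hhalf : (1 + t ^ 2 : ℝ) ^ ((1:ℝ)/2) ≤ (2:ℝ) ^ ((1:ℝ)/2) * t := by
    have h1 : (1 + t ^ 2 : ℝ) ^ ((1:ℝ)/2) ≤ (2 * t ^ 2 : ℝ) ^ ((1:ℝ)/2) :=
      Real.rpow_le_rpow (by positivity) (by nlinarith) (by norm_num)
    have h2 : (2 * t ^ 2 : ℝ) ^ ((1:ℝ)/2) = (2:ℝ) ^ ((1:ℝ)/2) * t := by
      rw [Real.mul_rpow (by norm_num) (by positivity), ← Real.rpow_natCast t 2,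
        ← Real.rpow_mul htpos.le]
      norm_num
    rw [← h2]; exact h1
  rw [hsplit]
  exact mul_le_mul_of_nonneg_left hhalf (rpow_pos_of_pos (by positivity) _).le

private lemma aux4 {M t x : ℝ} (hM : 0 < M) (ht : 1 < t) (hx0 : 0 ≤ x)
    (hx : x ≤ M + t) : 1 + x ^ 2 ≤ (M+1) ^ 2 * (1 + t ^ 2) := by
  nlinarith [pow_le_pow_left₀ hx0 hx 2, mul_nonneg hM.le (sq_nonneg (t-1)),
    mul_nonneg (mul_nonneg hM.le hM.le) (sq_nonneg t), mul_nonneg hM.le (sq_nonneg t)]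

set_option maxHeartbeats 1000000 in
theorem stmt_8 (p L : ℝ) (hp : 1 < p) (hL : 0 < L) (k : ℕ) (hk : 1 ≤ k)
    (f : EuclideanSpace ℝ (Fin k) → ℝ) (hf : ContDiff ℝ 2 f)
    (hgrowth : ∀ ξ : EuclideanSpace ℝ (Fin k), |f ξ| ≤ L * (1 + ‖ξ‖ ^ p))
    (hgrad : ∀ ξ : EuclideanSpace ℝ (Fin k),
      ‖gradient f ξ‖ ≤ L * (1 + ‖ξ‖ ^ 2) ^ ((p - 1) / 2)) :
    ∀ M : ℝ, 0 < M → ∃ c : ℝ, 0 < c ∧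
      ∀ Q : EuclideanSpace ℝ (Fin k), ‖Q‖ ≤ M →
        ∀ lam : ℝ, 0 < lam → ∀ ξ : EuclideanSpace ℝ (Fin k),
          |(f (Q + lam • ξ) - f Q - (inner ℝ (gradient f Q) (lam • ξ) : ℝ)) / lam ^ 2| ≤
              c * (1 + ‖lam • ξ‖ ^ 2) ^ ((p - 2) / 2) * ‖ξ‖ ^ 2 ∧
            ‖lam⁻¹ • (gradient f (Q + lam • ξ) - gradient f Q)‖ ≤
              c * (1 + ‖lam • ξ‖ ^ 2) ^ ((p - 2) / 2) * ‖ξ‖ := by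
  intro M hM
  have hp0 : (0:ℝ) < p := lt_trans one_pos hp
  have hM1 : (0:ℝ) < M + 1 := by linarith
  set g : EuclideanSpace ℝ (Fin k) → (EuclideanSpace ℝ (Fin k) →L[ℝ] ℝ) :=
    fderiv ℝ f with hgdef
  have hfd : Differentiable ℝ f := hf.differentiable two_ne_zero
  have hgc : ContDiff ℝ 1 g := hf.fderiv_right (le_refl 2)
  have hgd : Differentiable ℝ g := hgc.differentiable one_ne_zero
  obtain ⟨K0, hK0⟩ := (isCompact_closedBall (0 : EuclideanSpace ℝ (Fin k))
      (M + 2)).exists_bound_of_continuousOn ((hgc.continuous_fderiv one_ne_zero).continuousOn)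
  set K := max K0 1 with hKdef
  have hK1 : (1:ℝ) ≤ K := le_max_right _ _
  have hKpos : (0:ℝ) < K := lt_of_lt_of_le one_pos hK1
  have hlip : ∀ x ∈ closedBall (0 : EuclideanSpace ℝ (Fin k)) (M+1),
      ∀ y ∈ closedBall (0 : EuclideanSpace ℝ (Fin k)) (M+1),
      ‖g y - g x‖ ≤ K * ‖y - x‖ := by
    intro x hx y hy
    refine (convex_closedBall (0 : EuclideanSpace ℝ (Fin k)) (M+1)).norm_image_sub_le_of_norm_fderiv_le
      (fun z _ => hgd z) (fun z hz => ?_) hx hy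
    refine le_trans (hK0 z ?_) (le_max_left _ _)
    exact closedBall_subset_closedBall (by linarith) hz
  -- constants
  have hMp : (0:ℝ) ≤ (1+M^2) ^ ((p-1)/2) := Real.rpow_nonneg (by positivity) _
  set m : ℝ := min 1 ((2:ℝ) ^ ((p-2)/2)) with hmdef
  have hm : (0:ℝ) < m := lt_min one_pos (rpow_pos_of_pos two_pos _)
  set B2 : ℝ := max 1 ((2:ℝ) ^ (-((p-2)/2))) with hB2def
  have hB2 : (1:ℝ) ≤ B2 := le_max_left _ _
  set S2 : ℝ := L * (M+1) ^ (p-1) + L * (1+M^2) ^ ((p-1)/2) with hS2def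
  have hS2 : 0 < S2 :=
    add_pos (mul_pos hL (rpow_pos_of_pos hM1 _)) (mul_pos hL (rpow_pos_of_pos (by positivity) _))
  set S1 : ℝ := L * (1 + (M+1) ^ p) + L * (1 + M ^ p) + L * (1+M^2) ^ ((p-1)/2) with hS1def
  have hS1 : 0 < S1 := by
    have h1 : 0 < L * (1 + (M+1) ^ p) :=
      mul_pos hL (add_pos one_pos (rpow_pos_of_pos hM1 _))
    have h2 : 0 < L * (1 + M ^ p) :=
      mul_pos hL (add_pos one_pos (rpow_pos_of_pos hM _))
    have h3 : 0 < L * (1+M^2) ^ ((p-1)/2) :=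
      mul_pos hL (rpow_pos_of_pos (by positivity) _)
    rw [hS1def]
    linarith
  set C1 : ℝ := K / m with hC1def
  have hC1 : 0 < C1 := div_pos hKpos hm
  set C2 : ℝ := (2:ℝ) ^ ((1:ℝ)/2) * S2 with hC2def
  have hC2 : 0 < C2 := mul_pos (rpow_pos_of_pos two_pos _) hS2
  set C3 : ℝ := S1 * B2 with hC3def
  have hC3 : 0 < C3 := mul_pos hS1 (lt_of_lt_of_le one_pos hB2)
  clear_value K m B2 S2 S1 C1 C2 C3
  refine ⟨C1 + C2 + C3, by linarith, ?_⟩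
  intro Q hQ lam hlam ξ
  have hlam2 : (0:ℝ) < lam ^ 2 := pow_pos hlam 2
  have hlaminv : (0:ℝ) ≤ lam⁻¹ := inv_nonneg.2 hlam.le
  set x' : EuclideanSpace ℝ (Fin k) := Q + lam • ξ with hx'def
  set t : ℝ := ‖lam • ξ‖ with htdef
  have ht0 : 0 ≤ t := htdef ▸ norm_nonneg _
  have ht : t = lam * ‖ξ‖ := by
    rw [htdef, norm_smul, Real.norm_of_nonneg hlam.le]
  set A : ℝ := (1 + t ^ 2) ^ ((p-2)/2) with hAdef
  clear_value x' t A
  have hA0 : 0 < A := by rw [hAdef]; exact rpow_pos_of_pos (by positivity) _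
  have hxin : ‖x'‖ ≤ M + t := by
    rw [hx'def, htdef]
    exact le_trans (norm_add_le _ _) (by gcongr)
  -- rewriting gradients via `g`
  have hgradnorm : ∀ x : EuclideanSpace ℝ (Fin k), ‖gradient f x‖ = ‖g x‖ := by
    intro x
    rw [gradient, hgdef]
    exact (InnerProductSpace.toDual ℝ (EuclideanSpace ℝ (Fin k))).symm.norm_map _
  have hdiffnorm : ‖gradient f x' - gradient f Q‖ = ‖g x' - g Q‖ := by
    rw [gradient, gradient, ← map_sub, hgdef]
    exact (InnerProductSpace.toDual ℝ (EuclideanSpace ℝ (Fin k))).symm.norm_map _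
  have hinner : (inner ℝ (gradient f Q) (lam • ξ) : ℝ) = g Q (lam • ξ) := by
    rw [gradient, hgdef]; exact InnerProductSpace.toDual_symm_apply
  have hLHS2 : ‖lam⁻¹ • (gradient f x' - gradient f Q)‖ = lam⁻¹ * ‖g x' - g Q‖ := by
    rw [norm_smul, hdiffnorm, Real.norm_of_nonneg hlaminv]
  have hLHS1 : |(f x' - f Q - (inner ℝ (gradient f Q) (lam • ξ) : ℝ)) / lam ^ 2|
      = |f x' - f Q - g Q (lam • ξ)| / lam ^ 2 := by
    rw [hinner, abs_div, abs_of_pos hlam2]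
  have tri : ∀ a b : ℝ, |a - b| ≤ |a| + |b| := fun a b => by
    rw [sub_eq_add_neg]
    exact le_trans (abs_add_le _ _) (by rw [abs_neg])
  have hglue : ∀ s : ℝ, 0 ≤ s →
      (∀ C0 : ℝ, C0 = C1 ∨ C0 = C2 ∨ C0 = C3 → ∀ X : ℝ, X ≤ C0 * A * s →
        X ≤ (C1 + C2 + C3) * A * s) := by
    intro s hs C0 hC0 X hX
    have h0 : C0 ≤ C1 + C2 + C3 := by rcases hC0 with h|h|h <;> subst h <;> linarith
    exact le_trans hX (mul_le_mul_of_nonneg_right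
      (mul_le_mul_of_nonneg_right h0 hA0.le) hs)
  rcases le_or_gt t 1 with hcase | hcase
  · -- small case : t ≤ 1
    have hmA : m ≤ A := by rw [hmdef, hAdef]; exact aux1 ht0 hcase
    have hQmem : Q ∈ closedBall (0 : EuclideanSpace ℝ (Fin k)) (M+1) :=
      mem_closedBall_zero_iff.2 (by linarith)
    have hx'mem : x' ∈ closedBall (0 : EuclideanSpace ℝ (Fin k)) (M+1) :=
      mem_closedBall_zero_iff.2 (by linarith)
    have hfin : ∀ s X : ℝ, 0 ≤ s → X ≤ K * s → X ≤ (C1 + C2 + C3) * A * s := by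
      intro s X hs hX
      refine hglue s hs C1 (Or.inl rfl) X (le_trans hX ?_)
      have hKm : K = C1 * m := by rw [hC1def]; field_simp
      rw [hKm]
      exact mul_le_mul_of_nonneg_right (mul_le_mul_of_nonneg_left hmA hC1.le) hs
    have hxQ : x' - Q = lam • ξ := by rw [hx'def]; abel
    constructor
    · -- Taylor estimate on the ball `closedBall Q t`
      have hsub : closedBall Q t ⊆ closedBall (0 : EuclideanSpace ℝ (Fin k)) (M+1) := by
        intro z hz
        refine mem_closedBall_zero_iff.2 ?_
        have hz' : ‖z - Q‖ ≤ t := mem_closedBall_iff_norm.1 hz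
        calc ‖z‖ = ‖Q + (z - Q)‖ := by congr 1; abel
          _ ≤ ‖Q‖ + ‖z - Q‖ := norm_add_le _ _
          _ ≤ M + 1 := by linarith
      have htay : ‖f x' - f Q - (g Q) (x' - Q)‖ ≤ (K * t) * ‖x' - Q‖ := by
        refine (convex_closedBall Q t).norm_image_sub_le_of_norm_fderiv_le'
          (fun z _ => hfd z) (fun z hz => ?_) (mem_closedBall_self ht0) ?_
        · rw [← hgdef]
          refine le_trans (hlip Q hQmem z (hsub hz)) ?_
          exact mul_le_mul_of_nonneg_left (mem_closedBall_iff_norm.1 hz) hKpos.le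
        · exact mem_closedBall_iff_norm.2 (by rw [hxQ, ← htdef])
      rw [hLHS1]
      refine hfin (‖ξ‖^2) _ (by positivity) ?_
      rw [hxQ, ← htdef] at htay
      rw [div_le_iff₀ hlam2]
      calc |f x' - f Q - g Q (lam • ξ)| ≤ K * t * t := htay
        _ = K * ‖ξ‖ ^ 2 * lam ^ 2 := by rw [ht]; ring
    · rw [hLHS2]
      refine hfin ‖ξ‖ _ (norm_nonneg _) ?_
      have hl := hlip Q hQmem x' hx'mem
      rw [hxQ, ← htdef] at hl
      calc lam⁻¹ * ‖g x' - g Q‖ ≤ lam⁻¹ * (K * t) :=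
            mul_le_mul_of_nonneg_left hl hlaminv
        _ = K * ‖ξ‖ := by rw [ht]; field_simp
  · -- large case : 1 < t
    have ht1 : (1:ℝ) < t := hcase
    have htpos : (0:ℝ) < t := lt_trans one_pos ht1
    have h1x : 1 + ‖x'‖ ^ 2 ≤ (M+1) ^ 2 * (1 + t ^ 2) :=
      aux4 hM ht1 (norm_nonneg _) hxin
    have hQ2 : 1 + ‖Q‖ ^ 2 ≤ 1 + M ^ 2 := by
      have := pow_le_pow_left₀ (norm_nonneg Q) hQ 2
      linarith
    have htp1 : (1:ℝ) ≤ t ^ p := one_le_rpow ht1.le hp0.le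
    have hrp1 : t ≤ t ^ p := by
      calc t = t ^ (1:ℝ) := (rpow_one t).symm
        _ ≤ t ^ p := Real.rpow_le_rpow_of_exponent_le ht1.le hp.le
    have htA : t ^ (p - 2) ≤ B2 * A := by rw [hB2def, hAdef]; exact aux2 ht1
    have hX1 : (1:ℝ) ≤ (1 + t ^ 2) ^ ((p-1)/2) := one_le_rpow (by linarith [sq_nonneg t]) (by linarith)
    have hX0 : (0:ℝ) ≤ (1 + t ^ 2) ^ ((p-1)/2) := le_trans zero_le_one hX1
    have hgQb : ‖g Q‖ ≤ L * (1+M^2) ^ ((p-1)/2) := by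
      rw [← hgradnorm]
      refine le_trans (hgrad Q) (mul_le_mul_of_nonneg_left ?_ hL.le)
      exact Real.rpow_le_rpow (by positivity) hQ2 (by linarith)
    constructor
    · -- f bound
      rw [hLHS1]
      have hx'p : ‖x'‖ ^ p ≤ (M+1) ^ p * t ^ p := by
        calc ‖x'‖ ^ p ≤ ((M+1) * t) ^ p := by
              refine Real.rpow_le_rpow (norm_nonneg _) ?_ hp0.le
              have hMt : M * 1 ≤ M * t := mul_le_mul_of_nonneg_left ht1.le hM.le
              calc ‖x'‖ ≤ M + t := hxin
                _ ≤ (M+1) * t := by linarith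
          _ = (M+1) ^ p * t ^ p := Real.mul_rpow hM1.le htpos.le
      have hMp0 : (0:ℝ) ≤ (M+1) ^ p := Real.rpow_nonneg hM1.le _
      have hb1 : |f x'| ≤ L * (1 + (M+1) ^ p) * t ^ p := by
        calc |f x'| ≤ L * (1 + ‖x'‖ ^ p) := hgrowth x'
          _ ≤ L * (t ^ p + (M+1) ^ p * t ^ p) :=
              mul_le_mul_of_nonneg_left (add_le_add htp1 hx'p) hL.le
          _ = L * (1 + (M+1) ^ p) * t ^ p := by ring
      have hb2 : |f Q| ≤ L * (1 + M ^ p) * t ^ p := by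
        have hQp : ‖Q‖ ^ p ≤ M ^ p := Real.rpow_le_rpow (norm_nonneg _) hQ hp0.le
        have h1 : |f Q| ≤ L * (1 + M ^ p) :=
          le_trans (hgrowth Q) (mul_le_mul_of_nonneg_left (by linarith) hL.le)
        refine le_trans h1 (le_mul_of_one_le_right ?_ htp1)
        have : (0:ℝ) ≤ M ^ p := Real.rpow_nonneg hM.le _
        positivity
      have hb3 : |g Q (lam • ξ)| ≤ L * (1+M^2) ^ ((p-1)/2) * t ^ p := by
        calc |g Q (lam • ξ)| ≤ ‖g Q‖ * t := by rw [htdef]; exact (g Q).le_opNorm _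
          _ ≤ L * (1+M^2) ^ ((p-1)/2) * t :=
              mul_le_mul_of_nonneg_right hgQb ht0
          _ ≤ L * (1+M^2) ^ ((p-1)/2) * t ^ p :=
              mul_le_mul_of_nonneg_left hrp1 (mul_nonneg hL.le hMp)
      have hnum : |f x' - f Q - g Q (lam • ξ)| ≤ S1 * t ^ p := by
        have h1 := tri (f x' - f Q) (g Q (lam • ξ))
        have h2 := tri (f x') (f Q)
        rw [hS1def]
        linarith
      refine hglue (‖ξ‖^2) (by positivity) C3 (Or.inr (Or.inr rfl)) _ ?_
      rw [div_le_iff₀ hlam2]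
      have htsplit : t ^ p = t ^ (p-2) * (lam ^ 2 * ‖ξ‖ ^ 2) := by
        have h1 : t ^ p = t ^ (p-2) * t ^ ((2:ℕ):ℝ) := by
          rw [← Real.rpow_add htpos]
          congr 1
          push_cast
          ring
        rw [h1, Real.rpow_natCast t 2, ht]; ring
      calc |f x' - f Q - g Q (lam • ξ)| ≤ S1 * t ^ p := hnum
        _ = S1 * t ^ (p-2) * ‖ξ‖ ^ 2 * lam ^ 2 := by rw [htsplit]; ring
        _ ≤ S1 * (B2 * A) * ‖ξ‖ ^ 2 * lam ^ 2 :=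
            mul_le_mul_of_nonneg_right (mul_le_mul_of_nonneg_right
              (mul_le_mul_of_nonneg_left htA hS1.le) (sq_nonneg _)) (sq_nonneg _)
        _ = C3 * A * ‖ξ‖ ^ 2 * lam ^ 2 := by rw [hC3def]; ring
    · -- gradient bound
      rw [hLHS2]
      have hgx' : ‖g x'‖ ≤ L * (M+1) ^ (p-1) * (1 + t ^ 2) ^ ((p-1)/2) := by
        rw [← hgradnorm]
        refine le_trans (hgrad x') ?_
        have h1 : (1 + ‖x'‖ ^ 2 : ℝ) ^ ((p-1)/2) ≤ ((M+1) ^ 2 * (1 + t ^ 2)) ^ ((p-1)/2) :=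
          Real.rpow_le_rpow (by positivity) h1x (by linarith)
        have h2 : (((M+1):ℝ) ^ 2 * (1 + t ^ 2)) ^ ((p-1)/2)
            = (M+1) ^ (p-1) * (1 + t ^ 2) ^ ((p-1)/2) := by
          rw [Real.mul_rpow (by positivity) (by positivity), ← Real.rpow_natCast (M+1) 2,
            ← Real.rpow_mul hM1.le]
          congr 2
          push_cast
          ring
        rw [mul_assoc, ← h2]
        exact mul_le_mul_of_nonneg_left h1 hL.le
      have hgQ' : ‖g Q‖ ≤ L * (1+M^2) ^ ((p-1)/2) * (1 + t ^ 2) ^ ((p-1)/2) :=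
        le_trans hgQb (le_mul_of_one_le_right (mul_nonneg hL.le hMp) hX1)
      have hsum : ‖g x' - g Q‖ ≤ S2 * (1 + t ^ 2) ^ ((p-1)/2) := by
        calc ‖g x' - g Q‖ ≤ ‖g x'‖ + ‖g Q‖ := norm_sub_le _ _
          _ ≤ L * (M+1) ^ (p-1) * (1 + t ^ 2) ^ ((p-1)/2)
              + L * (1+M^2) ^ ((p-1)/2) * (1 + t ^ 2) ^ ((p-1)/2) := add_le_add hgx' hgQ'
          _ = S2 * (1 + t ^ 2) ^ ((p-1)/2) := by rw [hS2def]; ring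
      refine hglue ‖ξ‖ (norm_nonneg _) C2 (Or.inr (Or.inl rfl)) _ ?_
      have haux3 : (1 + t ^ 2 : ℝ) ^ ((p-1)/2) ≤ A * ((2:ℝ) ^ ((1:ℝ)/2) * t) := by
        rw [hAdef]; exact aux3 ht1
      calc lam⁻¹ * ‖g x' - g Q‖
          ≤ lam⁻¹ * (S2 * (A * ((2:ℝ) ^ ((1:ℝ)/2) * t))) := by
            refine mul_le_mul_of_nonneg_left (le_trans hsum ?_) hlaminv
            exact mul_le_mul_of_nonneg_left haux3 hS2.le
        _ = C2 * A * ‖ξ‖ := by rw [hC2def, ht]; field_simp
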